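/- Let A be a complete abelian category and ⋯ → X_3 → X_2 → X_1 an inverse system of chain maps of complexes in C(A), each of which is a degree-wise split epimorphism. If every X_i is contractible, then the inverse limit lim_i X_i is contractible. -/

import Mathlib

open CategoryTheory CategoryTheory.Limits

namespace LimContrAux

variable {A : Type*} [Category A] [Preadditive A]

lemma down_rel_pred (i : ℤ) : (ComplexShape.down ℤ).Rel i (i - 1) := by
  simp [ComplexShape.down_Rel]

lemma down_rel_succ (i : ℤ) : (ComplexShape.down ℤ).Rel (i + 1) i := by
  simp [ComplexShape.down_Rel]

/-- Explicit form of the contraction identity at degree `i`. -/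
lemma contraction_eq {X : ChainComplex A ℤ} (U : Homotopy (𝟙 X) 0) (i : ℤ) :
    X.d i (i - 1) ≫ U.hom (i - 1) i + U.hom i (i + 1) ≫ X.d (i + 1) i = 𝟙 (X.X i) := by
  have := U.comm i
  rw [dNext_eq U.hom (down_rel_pred i), prevD_eq U.hom (down_rel_succ i)] at this
  simpa using this.symm

section
variable {X Y : ChainComplex A ℤ} (f : X ⟶ Y) (σ : ∀ i, Y.X i ⟶ X.X i)
  (U : Homotopy (𝟙 X) 0) (T : Homotopy (𝟙 Y) 0)

/-- The defect `h = f ∘ u - t ∘ f`. -/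
def hF (i j : ℤ) : X.X i ⟶ Y.X j := U.hom i j ≫ f.f j - f.f i ≫ T.hom i j

/-- A degreewise lift of `h` along the splitting `σ`. -/
def cF (i j : ℤ) : X.X i ⟶ X.X j := hF f U T i j ≫ σ j

/-- The chain-map defect `e = d c + c d` of `cF`. -/
def eF (j : ℤ) : X.X j ⟶ X.X j :=
  X.d j (j - 1) ≫ cF f σ U T (j - 1) j + cF f σ U T j (j + 1) ≫ X.d (j + 1) j

lemma cF_f (hσ : ∀ i, σ i ≫ f.f i = 𝟙 (Y.X i)) (i j : ℤ) :
    cF f σ U T i j ≫ f.f j = hF f U T i j := by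
  simp [cF, hσ j]

lemma hF_closed (j : ℤ) :
    X.d j (j - 1) ≫ hF f U T (j - 1) j + hF f U T j (j + 1) ≫ Y.d (j + 1) j = 0 := by
  have h1 := congr_arg (fun g => g ≫ f.f j) (contraction_eq U j)
  simp only [Preadditive.add_comp, Category.assoc, Category.id_comp] at h1
  have h2 := congr_arg (fun g => f.f j ≫ g) (contraction_eq T j)
  simp only [Preadditive.comp_add, Category.comp_id] at h2
  simp only [hF, Preadditive.sub_comp, Preadditive.comp_sub, Category.assoc]
  rw [f.comm (j + 1) j, reassoc_of% (f.comm j (j - 1)).symm]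
  rw [sub_add_sub_comm, h1, h2, sub_self]

/-- Generalized first summand of `eF`, for index juggling. -/
lemma eF_eq' {a b : ℤ} (hb : b = a - 1) :
    eF f σ U T a = X.d a b ≫ cF f σ U T b a + cF f σ U T a (a + 1) ≫ X.d (a + 1) a := by
  subst hb; rfl

lemma eF_f (hσ : ∀ i, σ i ≫ f.f i = 𝟙 (Y.X i)) (j : ℤ) :
    eF f σ U T j ≫ f.f j = 0 := by
  have := hF_closed f U T j
  rw [eF, Preadditive.add_comp, Category.assoc, Category.assoc, cF_f f σ U T hσ,
    ← f.comm (j + 1) j, ← Category.assoc (cF f σ U T j (j + 1)), cF_f f σ U T hσ]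
  simpa [Category.assoc] using this

lemma eF_d (i : ℤ) :
    eF f σ U T (i + 1) ≫ X.d (i + 1) i = X.d (i + 1) i ≫ eF f σ U T i := by
  rw [eF_eq' f σ U T (a := i + 1) (b := i) (by ring), eF]
  simp only [Preadditive.add_comp, Preadditive.comp_add, Category.assoc]
  rw [X.d_comp_d (i + 1 + 1) (i + 1) i, X.d_comp_d_assoc (i + 1) i (i - 1)]
  simp

include U in
lemma lift_contraction (hσ : ∀ i, σ i ≫ f.f i = 𝟙 (Y.X i)) :
    ∃ U' : Homotopy (𝟙 X) 0, ∀ i j, U'.hom i j ≫ f.f j = f.f i ≫ T.hom i j := by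
  refine ⟨{ hom := fun i j => U.hom i j - cF f σ U T i j + U.hom i j ≫ eF f σ U T j
            zero := fun i j hij => by
              simp [cF, hF, U.zero i j hij, T.zero i j hij]
            comm := fun i => by
              rw [dNext_eq _ (down_rel_pred i), prevD_eq _ (down_rel_succ i)]
              have h3 := congr_arg (fun g => g ≫ eF f σ U T i) (contraction_eq U i)
              simp only [Preadditive.add_comp, Category.assoc, Category.id_comp] at h3
              simp only [HomologicalComplex.id_f, HomologicalComplex.zero_f, add_zero,
                Preadditive.comp_sub, Preadditive.sub_comp, Preadditive.comp_add,
                Preadditive.add_comp, Category.assoc]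
              rw [eF_d f σ U T i]
              calc 𝟙 (X.X i)
                  = (X.d i (i - 1) ≫ U.hom (i - 1) i + U.hom i (i + 1) ≫ X.d (i + 1) i)
                    - (X.d i (i - 1) ≫ cF f σ U T (i - 1) i + cF f σ U T i (i + 1) ≫ X.d (i + 1) i)
                    + (X.d i (i - 1) ≫ U.hom (i - 1) i ≫ eF f σ U T i
                      + U.hom i (i + 1) ≫ X.d (i + 1) i ≫ eF f σ U T i) := by
                    rw [contraction_eq U i, h3, ← eF]; simp
                _ = _ := by abel },
          fun i j => ?_⟩
  simp only [Preadditive.sub_comp, Preadditive.add_comp, Category.assoc,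
    cF_f f σ U T hσ, eF_f f σ U T hσ, comp_zero, hF]
  abel

end
end LimContrAux

open LimContrAux

/-- Let `A` be a complete abelian category and `⋯ → X₃ → X₂ → X₁` an inverse
system of chain maps of complexes in `C(A)`, each of which is a degree-wise split
epimorphism.  If every `Xᵢ` is contractible, then the inverse limit `lim Xᵢ` is
contractible. -/
theorem limit_contractible_of_degreewise_split_epi
    (A : Type*) [Category A] [Abelian A] [HasLimits A]
    (F : ℕᵒᵖ ⥤ ChainComplex A ℤ)
    (hsplit : ∀ (n : ℕ) (i : ℤ),
      IsSplitEpi ((F.map (homOfLE (Nat.le_succ n)).op).f i))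
    (hcontr : ∀ n : ℕ, Nonempty (Homotopy (𝟙 (F.obj (Opposite.op n))) 0)) :
    Nonempty (Homotopy (𝟙 (limit F)) 0) := by
  classical
  have step : ∀ (n : ℕ) (T : Homotopy (𝟙 (F.obj (Opposite.op n))) 0),
      ∃ U' : Homotopy (𝟙 (F.obj (Opposite.op (n + 1)))) 0,
        ∀ i j, U'.hom i j ≫ (F.map (homOfLE (Nat.le_succ n)).op).f j
            = (F.map (homOfLE (Nat.le_succ n)).op).f i ≫ T.hom i j := by
    intro n T
    exact lift_contraction (F.map (homOfLE (Nat.le_succ n)).op)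
      (fun i => ((hsplit n i).exists_splitEpi).some.section_) (hcontr (n + 1)).some T
      (fun i => ((hsplit n i).exists_splitEpi).some.id)
  choose nxt hnxt using step
  let S : ∀ n : ℕ, Homotopy (𝟙 (F.obj (Opposite.op n))) 0 :=
    fun n => Nat.rec (hcontr 0).some (fun n T => nxt n T) n
  have hstep : ∀ n i j, (S (n + 1)).hom i j ≫ (F.map (homOfLE (Nat.le_succ n)).op).f j
      = (F.map (homOfLE (Nat.le_succ n)).op).f i ≫ (S n).hom i j := fun n => hnxt n (S n)
  have compat : ∀ {n m : ℕ} (h : n ≤ m) (i j : ℤ),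
      (S m).hom i j ≫ (F.map (homOfLE h).op).f j
        = (F.map (homOfLE h).op).f i ≫ (S n).hom i j := by
    intro n m h
    induction h with
    | refl =>
      intro i j
      have h1 : ∀ (h' : n ≤ n), F.map (homOfLE h').op = 𝟙 _ := fun h' => by
        rw [show (homOfLE h').op = 𝟙 (Opposite.op n) from rfl, F.map_id]
      rw [h1]
      simp
    | @step m hm ih =>
      intro i j
      have h2 : ∀ (h' : n ≤ m + 1), F.map (homOfLE h').op
          = F.map (homOfLE (Nat.le_succ m)).op ≫ F.map (homOfLE hm).op := fun h' => by
        rw [← F.map_comp]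
        congr 1
      rw [h2]
      simp only [HomologicalComplex.comp_f, ← Category.assoc]
      rw [hstep m i j]
      simp only [Category.assoc]
      rw [ih i j]
  have hL : ∀ k : ℤ, IsLimit
      ((HomologicalComplex.eval A (ComplexShape.down ℤ) k).mapCone (limit.cone F)) :=
    fun k => isLimitOfPreserves _ (limit.isLimit F)
  let C : ∀ a b : ℤ, Cone (F ⋙ HomologicalComplex.eval A (ComplexShape.down ℤ) b) :=
    fun a b =>
      { pt := (limit F).X a
        π := { app := fun n => (limit.π F n).f a ≫ (S n.unop).hom a b
               naturality := fun n m g => by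
                 dsimp
                 show 𝟙 ((limit F).X a) ≫ (limit.π F m).f a ≫ (S m.unop).hom a b
                   = ((limit.π F n).f a ≫ (S n.unop).hom a b) ≫ (F.map g).f b
                 rw [Category.id_comp, Category.assoc]
                 have hg : g = (homOfLE (leOfHom g.unop)).op := by
                   rw [← g.op_unop]
                   congr 1
                 rw [hg, compat (leOfHom g.unop) a b]
                 simp only [← Category.assoc, ← HomologicalComplex.comp_f, limit.w F] }}
  let hom : ∀ a b : ℤ, (limit F).X a ⟶ (limit F).X b := fun a b => (hL b).lift (C a b)
  have fac : ∀ (a b : ℤ) (n : ℕᵒᵖ),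
      hom a b ≫ (limit.π F n).f b = (limit.π F n).f a ≫ (S n.unop).hom a b :=
    fun a b n => (hL b).fac (C a b) n
  refine ⟨{ hom := hom
            zero := fun a b hab => (hL b).hom_ext fun n => ?_
            comm := fun i => ?_ }⟩
  · have := fac a b n
    simp only [Functor.mapCone_π_app, HomologicalComplex.eval_map, limit.cone_π]
    change hom a b ≫ (limit.π F n).f b = (0 : (limit F).X a ⟶ (limit F).X b) ≫ (limit.π F n).f b
    rw [this, (S n.unop).zero a b hab]
    simp
  · rw [dNext_eq _ (down_rel_pred i), prevD_eq _ (down_rel_succ i)]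
    refine (hL i).hom_ext fun n => ?_
    simp only [Functor.mapCone_π_app, HomologicalComplex.eval_map, limit.cone_π,
      HomologicalComplex.id_f, HomologicalComplex.zero_f, add_zero,
      Preadditive.add_comp, Category.assoc, Category.id_comp]
    have hd1 : (limit F).d i (i - 1) ≫ (limit.π F n).f (i - 1)
        = (limit.π F n).f i ≫ (F.obj n).d i (i - 1) := ((limit.π F n).comm i (i - 1)).symm
    have hd2 : (limit.π F n).f (i + 1) ≫ (F.obj n).d (i + 1) i
        = (limit F).d (i + 1) i ≫ (limit.π F n).f i := (limit.π F n).comm (i + 1) i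
    change 𝟙 ((limit F).X i) ≫ (limit.π F n).f i = ((limit F).d i (i - 1) ≫ hom (i - 1) i
      + hom i (i + 1) ≫ (limit F).d (i + 1) i) ≫ (limit.π F n).f i
    simp only [Preadditive.add_comp, Category.assoc, Category.id_comp]
    rw [fac (i - 1) i n, ← hd2, ← Category.assoc (hom i (i + 1)), fac i (i + 1) n,
      reassoc_of% hd1]
    have h3 := congr_arg (fun g => (limit.π F n).f i ≫ g) (contraction_eq (S n.unop) i)
    simp only [Preadditive.comp_add, Category.comp_id, Category.assoc] at h3
    simpa only [Category.assoc] using h3.symm
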